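/- Let ħ, m_e, ω_c, ω_p > 0; set m_p = m_e/ω_p², m_c = m_e/ω_c², M = (m_p + m_c)/2, μ = m_p·m_c/M and Ω = √(ω_p² + ω_c²). Let k_x, k_z, k_w ∈ ℝ and j ∈ ℕ, set v₀ = ħ·k_x/(√2·m_e), and define ψ : ℝ⁴ → ℂ by ψ(x,z,w,v) = exp(i(k_x·x + k_z·z + k_w·w))·exp(−μΩ(v − v₀)²/(2ħ))·He_j(√(2μΩ/ħ)·(v − v₀)). Then ψ is an eigenfunction of the effective Hamiltonian with eigenvalue ħ²k_z²/(2m_e) + ħ²k_w²/(2M) + ħΩ·(j + 1/2): for all (x,z,w,v) ∈ ℝ⁴, −(ħ²/(2m_e))·∂²ψ/∂z² − (ħ²/(2M))·∂²ψ/∂w² − (ħ²/(2μ))·∂²ψ/∂v² + (μΩ²/2)·[v²·ψ + (√2·iħ/m_e)·v·∂ψ/∂x − (ħ²/(2m_e²))·∂²ψ/∂x²] = (ħ²k_z²/(2m_e) + ħ²k_w²/(2M) + ħΩ·(j + 1/2))·ψ. These are the Landau polariton states, in which the cyclotron frequency ω_c is replaced by the polariton frequency Ω = √(ω_p² + ω_c²)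 and the levels remain degenerate in k_x. -/

import Mathlib

open Polynomial

private lemma derivative_hermite_succ (n : ℕ) :
    derivative (hermite (n+1)) = ((n : Polynomial ℤ) + 1) * hermite n := by
  induction n with
  | zero => simp [hermite_succ, hermite_zero]
  | succ n ih =>
      rw [hermite_succ (n+1), derivative_sub, derivative_mul, derivative_X, one_mul, ih,
        derivative_mul]
      have hD : derivative (hermite n) = X * hermite n - hermite (n+1) := by
        rw [hermite_succ n]; ring
      have h0 : derivative ((n : Polynomial ℤ) + 1) = 0 := by simp
      rw [hD, h0]
      push_cast
      ring

private lemma hermite_ode (j : ℕ) :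
    derivative (derivative (hermite j))
      = X * derivative (hermite j) - (j : Polynomial ℤ) * hermite j := by
  cases j with
  | zero => simp
  | succ n =>
      rw [derivative_hermite_succ n, derivative_mul]
      have h0 : derivative ((n : Polynomial ℤ) + 1) = 0 := by simp
      have hD : derivative (hermite n) = X * hermite n - hermite (n+1) := by
        rw [hermite_succ n]; ring
      rw [h0, hD]
      push_cast
      ring

private lemma my_exp_hasDerivAt (c v₀ v : ℝ) :
    HasDerivAt (fun t : ℝ => Real.exp (-(c*(t-v₀)^2)))
      ((-(2*c*(v-v₀))) * Real.exp (-(c*(v-v₀)^2))) v := by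
  have h0 : HasDerivAt (fun t : ℝ => -(c*(t-v₀)^2)) (-(2*c*(v-v₀))) v := by
    have := ((((hasDerivAt_id v).sub_const v₀).pow 2).const_mul c).neg
    refine this.congr_deriv (Eq.symm ?_)
    simp only [id_eq]
    push_cast
    ring
  simpa [mul_comm] using h0.exp

private lemma my_lin_hasDerivAt (b v₀ v : ℝ) :
    HasDerivAt (fun t : ℝ => b*(t-v₀)) b v := by
  simpa using ((hasDerivAt_id v).sub_const v₀).const_mul b

private lemma aeval_comp_hasDerivAt (b v₀ : ℝ) (P : Polynomial ℤ) (v : ℝ) :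
    HasDerivAt (fun t : ℝ => (aeval (b*(t-v₀)) P : ℝ))
      (b * aeval (b*(v-v₀)) (derivative P)) v := by
  have := (Polynomial.hasDerivAt_aeval (q := P) (b*(v-v₀))).comp v (my_lin_hasDerivAt b v₀ v)
  simpa [Function.comp_def, mul_comm] using this

private lemma gauss_hermite_hasDerivAt (c b v₀ : ℝ) (P : Polynomial ℤ) (v : ℝ) :
    HasDerivAt (fun t : ℝ => Real.exp (-(c*(t-v₀)^2)) * (aeval (b*(t-v₀)) P : ℝ))
      (Real.exp (-(c*(v-v₀)^2)) * ((-(2*c*(v-v₀))) * aeval (b*(v-v₀)) P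
        + b * aeval (b*(v-v₀)) (derivative P))) v := by
  have := (my_exp_hasDerivAt c v₀ v).mul (aeval_comp_hasDerivAt b v₀ P v)
  exact this.congr_deriv (by ring)

private lemma gauss_hermite_hasDerivAt2 (c b v₀ : ℝ) (hb : b^2 = 4*c) (j : ℕ) (v : ℝ) :
    HasDerivAt (fun t : ℝ => Real.exp (-(c*(t-v₀)^2)) *
        ((-(2*c*(t-v₀))) * (aeval (b*(t-v₀)) (hermite j) : ℝ)
          + b * (aeval (b*(t-v₀)) (derivative (hermite j)) : ℝ)))
      ((4*c^2*(v-v₀)^2 - 2*c - 4*c*(j:ℝ)) *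
        (Real.exp (-(c*(v-v₀)^2)) * (aeval (b*(v-v₀)) (hermite j) : ℝ))) v := by
  have hneg : HasDerivAt (fun t : ℝ => -(2*c*(t-v₀))) (-(2*c)) v := by
    exact (my_lin_hasDerivAt (2*c) v₀ v).neg
  have hP := aeval_comp_hasDerivAt b v₀ (hermite j) v
  have hP' := aeval_comp_hasDerivAt b v₀ (derivative (hermite j)) v
  have hsum := (hneg.mul hP).add (hP'.const_mul b)
  have key := (my_exp_hasDerivAt c v₀ v).mul hsum
  refine key.congr_deriv (Eq.symm ?_)
  simp only [Pi.mul_apply, Pi.add_apply]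
  have hC : (aeval (b*(v-v₀)) (derivative (derivative (hermite j))) : ℝ)
      = b*(v-v₀) * aeval (b*(v-v₀)) (derivative (hermite j))
        - (j:ℝ) * aeval (b*(v-v₀)) (hermite j) := by
    rw [hermite_ode j]
    simp
  rw [hC]
  linear_combination (Real.exp (-(c*(v-v₀)^2)) *
    ((j:ℝ) * (aeval (b*(v-v₀)) (hermite j) : ℝ)
      - (v-v₀) * b * (aeval (b*(v-v₀)) (derivative (hermite j)) : ℝ))) * hb

private lemma aeval_ofReal (p : Polynomial ℤ) (r : ℝ) :
    (aeval (r : ℂ)) p = ((aeval r p : ℝ) : ℂ) :=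
  aeval_algHom_apply Complex.ofRealHom.toIntAlgHom r p

private lemma pw1 (a d K : ℂ) (t : ℝ) :
    HasDerivAt (fun s : ℝ => Complex.exp (a * (s:ℂ) + d) * K)
      (a * (Complex.exp (a * (t:ℂ) + d) * K)) t := by
  have h : HasDerivAt (fun z : ℂ => Complex.exp (a * z + d))
      (Complex.exp (a * (t:ℂ) + d) * a) (t:ℂ) := by
    simpa using (((hasDerivAt_id (t:ℂ)).const_mul a).add_const d).cexp
  have h2 := (h.comp_ofReal).mul_const K
  exact h2.congr_deriv (by ring)

private lemma pw2 (a d K : ℂ) (t : ℝ) :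
    deriv (deriv (fun s : ℝ => Complex.exp (a * (s:ℂ) + d) * K)) t
      = a^2 * (Complex.exp (a * (t:ℂ) + d) * K) := by
  have h1 : deriv (fun s : ℝ => Complex.exp (a * (s:ℂ) + d) * K)
      = fun s : ℝ => Complex.exp (a * (s:ℂ) + d) * (a * K) := by
    funext s
    rw [(pw1 a d K s).deriv]
    ring
  rw [h1, (pw1 a d (a*K) t).deriv]
  ring

/-- Landau polaritons: in polaritonic coordinates `(x, z, w, v)` the function
`ψ = exp(i(k_x x + k_z z + k_w w)) · exp(−μΩ(v−v₀)²/(2ℏ)) · He_j(√(2μΩ/ℏ)(v−v₀))`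
with `v₀ = ℏk_x/(√2 m_e)` is an eigenfunction of the effective Hamiltonian of
Landau levels coupled to a cavity mode, with eigenvalue
`ℏ²k_z²/(2m_e) + ℏ²k_w²/(2M) + ℏΩ(j + 1/2)`, where `Ω = √(ω_p² + ω_c²)`. -/
theorem landau_polaritons
    (ℏ m_e ω_c ω_p : ℝ) (hℏ : 0 < ℏ) (hm : 0 < m_e) (hωc : 0 < ω_c) (hωp : 0 < ω_p)
    (m_p m_c M μ Ω : ℝ)
    (hmp : m_p = m_e / ω_p ^ 2) (hmc : m_c = m_e / ω_c ^ 2)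
    (hM : M = (m_p + m_c) / 2) (hμ : μ = m_p * m_c / M)
    (hΩ : Ω = Real.sqrt (ω_p ^ 2 + ω_c ^ 2))
    (k_x k_z k_w : ℝ) (j : ℕ) (v₀ : ℝ)
    (hv₀ : v₀ = ℏ * k_x / (Real.sqrt 2 * m_e))
    (ψ : ℝ → ℝ → ℝ → ℝ → ℂ)
    (hψ : ∀ x z w v : ℝ,
      ψ x z w v =
        Complex.exp (Complex.I * ((k_x * x + k_z * z + k_w * w : ℝ) : ℂ))
          * Complex.exp (-(((μ * Ω * (v - v₀) ^ 2 / (2 * ℏ) : ℝ) : ℂ)))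
          * Polynomial.aeval ((Real.sqrt (2 * μ * Ω / ℏ) * (v - v₀) : ℝ) : ℂ)
              (Polynomial.hermite j)) :
    ∀ x z w v : ℝ,
      -(ℏ : ℂ) ^ 2 / (2 * (m_e : ℂ)) * deriv (deriv (fun t : ℝ => ψ x t w v)) z
          - (ℏ : ℂ) ^ 2 / (2 * (M : ℂ)) * deriv (deriv (fun t : ℝ => ψ x z t v)) w
          - (ℏ : ℂ) ^ 2 / (2 * (μ : ℂ)) * deriv (deriv (fun t : ℝ => ψ x z w t)) v
          + ((μ * Ω ^ 2 / 2 : ℝ) : ℂ) *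
              ((v : ℂ) ^ 2 * ψ x z w v
                + (Real.sqrt 2 : ℂ) * Complex.I * (ℏ : ℂ) / (m_e : ℂ) * (v : ℂ)
                    * deriv (fun t : ℝ => ψ t z w v) x
                - (ℏ : ℂ) ^ 2 / (2 * (m_e : ℂ) ^ 2)
                    * deriv (deriv (fun t : ℝ => ψ t z w v)) x)
        = ((ℏ ^ 2 * k_z ^ 2 / (2 * m_e) + ℏ ^ 2 * k_w ^ 2 / (2 * M)
              + ℏ * Ω * ((j : ℝ) + 1 / 2) : ℝ) : ℂ) * ψ x z w v := by
  intro x z w v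
  have hmppos : 0 < m_p := by rw [hmp]; positivity
  have hmcpos : 0 < m_c := by rw [hmc]; positivity
  have hMpos : 0 < M := by rw [hM]; positivity
  have hμpos : 0 < μ := by rw [hμ]; positivity
  have hΩ0 : 0 ≤ Ω := by rw [hΩ]; positivity
  set c := μ * Ω / (2*ℏ) with hc
  set b := Real.sqrt (2*μ*Ω/ℏ) with hbdef
  have hnn : (0:ℝ) ≤ 2*μ*Ω/ℏ := by
    apply div_nonneg _ hℏ.le
    have := mul_nonneg (mul_nonneg (by norm_num : (0:ℝ) ≤ 2) hμpos.le) hΩ0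
    simpa [mul_assoc] using this
  have hb : b^2 = 4*c := by
    rw [hbdef, Real.sq_sqrt hnn, hc]
    field_simp
    ring
  set Kv := Complex.exp (-(((μ * Ω * (v - v₀) ^ 2 / (2 * ℏ) : ℝ) : ℂ)))
      * (Polynomial.aeval ((Real.sqrt (2 * μ * Ω / ℏ) * (v - v₀) : ℝ) : ℂ))
        (Polynomial.hermite j) with hKv
  have hψ' : ∀ x' z' w' : ℝ, ψ x' z' w' v
      = Complex.exp (Complex.I * ((k_x * x' + k_z * z' + k_w * w' : ℝ) : ℂ)) * Kv := by
    intro x' z' w'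
    rw [hψ x' z' w' v, mul_assoc, hKv]
  -- z direction
  have hz : deriv (deriv (fun t : ℝ => ψ x t w v)) z
      = (Complex.I * (k_z:ℂ))^2 * ψ x z w v := by
    have e1 : (fun t : ℝ => ψ x t w v)
        = fun t : ℝ => Complex.exp ((Complex.I * (k_z:ℂ)) * (t:ℂ)
            + (Complex.I * ((k_x * x : ℝ):ℂ) + Complex.I * ((k_w * w : ℝ):ℂ))) * Kv := by
      funext t
      rw [hψ' x t w]
      congr 1
      exact congrArg Complex.exp (by push_cast; ring)
    rw [e1, pw2]
    congr 1
    rw [hψ' x z w]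
    congr 1
    exact congrArg Complex.exp (by push_cast; ring)
  -- w direction
  have hw : deriv (deriv (fun t : ℝ => ψ x z t v)) w
      = (Complex.I * (k_w:ℂ))^2 * ψ x z w v := by
    have e1 : (fun t : ℝ => ψ x z t v)
        = fun t : ℝ => Complex.exp ((Complex.I * (k_w:ℂ)) * (t:ℂ)
            + (Complex.I * ((k_x * x : ℝ):ℂ) + Complex.I * ((k_z * z : ℝ):ℂ))) * Kv := by
      funext t
      rw [hψ' x z t]
      congr 1
      exact congrArg Complex.exp (by push_cast; ring)
    rw [e1, pw2]
    congr 1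
    rw [hψ' x z w]
    congr 1
    exact congrArg Complex.exp (by push_cast; ring)
  -- x direction
  have e1x : (fun t : ℝ => ψ t z w v)
      = fun t : ℝ => Complex.exp ((Complex.I * (k_x:ℂ)) * (t:ℂ)
          + (Complex.I * ((k_z * z : ℝ):ℂ) + Complex.I * ((k_w * w : ℝ):ℂ))) * Kv := by
    funext t
    rw [hψ' t z w]
    congr 1
    exact congrArg Complex.exp (by push_cast; ring)
  have hx2 : deriv (deriv (fun t : ℝ => ψ t z w v)) x
      = (Complex.I * (k_x:ℂ))^2 * ψ x z w v := by
    rw [e1x, pw2]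
    congr 1
    rw [hψ' x z w]
    congr 1
    exact congrArg Complex.exp (by push_cast; ring)
  have hx1 : deriv (fun t : ℝ => ψ t z w v) x
      = Complex.I * (k_x:ℂ) * ψ x z w v := by
    rw [e1x, (pw1 _ _ _ x).deriv]
    congr 1
    rw [hψ' x z w]
    congr 1
    exact congrArg Complex.exp (by push_cast; ring)
  -- v direction
  set F : ℝ → ℝ := fun t => Real.exp (-(c*(t-v₀)^2))
      * (Polynomial.aeval (b*(t-v₀)) (Polynomial.hermite j) : ℝ) with hF
  set G : ℝ → ℝ := fun t => Real.exp (-(c*(t-v₀)^2)) *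
      ((-(2*c*(t-v₀))) * (Polynomial.aeval (b*(t-v₀)) (Polynomial.hermite j) : ℝ)
        + b * (Polynomial.aeval (b*(t-v₀)) (Polynomial.derivative (Polynomial.hermite j)) : ℝ))
    with hG
  have harg : ∀ t : ℝ, μ * Ω * (t - v₀) ^ 2 / (2 * ℏ) = c * (t - v₀)^2 := by
    intro t; rw [hc]; ring
  have hSv : ∀ t : ℝ, ψ x z w t
      = Complex.exp (Complex.I * ((k_x * x + k_z * z + k_w * w : ℝ) : ℂ)) * ((F t : ℝ) : ℂ) := by
    intro t
    rw [hψ x z w t, mul_assoc]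
    congr 1
    simp only [hF]
    have hexpeq : Complex.exp (-(((μ * Ω * (t - v₀) ^ 2 / (2 * ℏ) : ℝ)) : ℂ))
        = ((Real.exp (-(c*(t-v₀)^2)) : ℝ) : ℂ) := by
      rw [Complex.ofReal_exp, Complex.ofReal_neg, ← harg t]
    rw [hexpeq, aeval_ofReal (Polynomial.hermite j) (b*(t-v₀)), ← Complex.ofReal_mul]
  have hFd : ∀ t : ℝ, HasDerivAt F (G t) t := by
    intro t
    simp only [hF, hG]
    exact gauss_hermite_hasDerivAt c b v₀ (Polynomial.hermite j) t
  have hGd : HasDerivAt G ((4*c^2*(v-v₀)^2 - 2*c - 4*c*(j:ℝ)) * F v) v := by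
    simp only [hF, hG]
    exact gauss_hermite_hasDerivAt2 c b v₀ hb j v
  have hv2 : deriv (deriv (fun t : ℝ => ψ x z w t)) v
      = Complex.exp (Complex.I * ((k_x * x + k_z * z + k_w * w : ℝ) : ℂ))
          * (((4*c^2*(v-v₀)^2 - 2*c - 4*c*(j:ℝ)) * F v : ℝ) : ℂ) := by
    have e : (fun t : ℝ => ψ x z w t) = fun t : ℝ =>
        Complex.exp (Complex.I * ((k_x * x + k_z * z + k_w * w : ℝ) : ℂ)) * ((F t : ℝ) : ℂ) :=
      funext hSv
    rw [e]
    have d1 : deriv (fun t : ℝ =>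
        Complex.exp (Complex.I * ((k_x * x + k_z * z + k_w * w : ℝ) : ℂ)) * ((F t : ℝ) : ℂ))
        = fun t : ℝ => Complex.exp (Complex.I * ((k_x * x + k_z * z + k_w * w : ℝ) : ℂ))
            * ((G t : ℝ) : ℂ) := by
      funext t
      exact (((hFd t).ofReal_comp).const_mul _).deriv
    rw [d1]
    exact ((hGd.ofReal_comp).const_mul _).deriv
  -- scalar identities
  have h2 : Real.sqrt 2 ^ 2 = 2 := Real.sq_sqrt (by norm_num)
  have hs0 : Real.sqrt 2 ≠ 0 := by positivity
  have hv0' : Real.sqrt 2 * ℏ / m_e * k_x = 2 * v₀ := by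
    rw [hv₀]
    field_simp
    linear_combination k_x * h2
  have hv0'' : ℏ^2/(2*m_e^2)*k_x^2 = v₀^2 := by
    have hsq : (Real.sqrt 2 * m_e)^2 = 2 * m_e^2 := by rw [mul_pow, h2]
    rw [hv₀, div_pow, hsq]
    ring
  have hpot : v^2 - Real.sqrt 2 * ℏ / m_e * v * k_x + ℏ^2/(2*m_e^2)*k_x^2 = (v - v₀)^2 := by
    linear_combination (-v) * hv0' + hv0''
  have hen : -(ℏ^2)/(2*μ)*(4*c^2*(v-v₀)^2 - 2*c - 4*c*(j:ℝ)) + μ*Ω^2/2*((v-v₀)^2)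
      = ℏ*Ω*((j:ℝ)+1/2) := by
    rw [hc]
    field_simp
    ring
  have hcomb : -(ℏ^2)/(2*μ)*(4*c^2*(v-v₀)^2 - 2*c - 4*c*(j:ℝ))
      + μ*Ω^2/2*(v^2 - Real.sqrt 2 * ℏ / m_e * v * k_x + ℏ^2/(2*m_e^2)*k_x^2)
      = ℏ*Ω*((j:ℝ)+1/2) := by
    rw [hpot]; exact hen
  have hcombC := congrArg (fun r : ℝ => (r : ℂ)) hcomb
  push_cast at hcombC
  rw [hz, hw, hv2, hx2, hx1, hSv v]
  push_cast
  linear_combination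
    (Complex.exp (Complex.I * ((k_x:ℂ)*(x:ℂ) + (k_z:ℂ)*(z:ℂ) + (k_w:ℂ)*(w:ℂ)))
        * ((F v : ℝ) : ℂ)) * hcombC
    + (-((ℏ:ℂ)^2/(2*(m_e:ℂ)))*(k_z:ℂ)^2*(Complex.exp (Complex.I * ((k_x:ℂ)*(x:ℂ)
        + (k_z:ℂ)*(z:ℂ) + (k_w:ℂ)*(w:ℂ))) * ((F v : ℝ) : ℂ))) * Complex.I_sq
    + (-((ℏ:ℂ)^2/(2*(M:ℂ)))*(k_w:ℂ)^2*(Complex.exp (Complex.I * ((k_x:ℂ)*(x:ℂ)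
        + (k_z:ℂ)*(z:ℂ) + (k_w:ℂ)*(w:ℂ))) * ((F v : ℝ) : ℂ))) * Complex.I_sq
    + ((μ:ℂ)*(Ω:ℂ)^2/2*(Real.sqrt 2 : ℂ)*(ℏ:ℂ)/(m_e:ℂ)*(v:ℂ)*(k_x:ℂ)
        *(Complex.exp (Complex.I * ((k_x:ℂ)*(x:ℂ) + (k_z:ℂ)*(z:ℂ) + (k_w:ℂ)*(w:ℂ)))
          * ((F v : ℝ) : ℂ))) * Complex.I_sq
    + (-((μ:ℂ)*(Ω:ℂ)^2/2)*((ℏ:ℂ)^2/(2*(m_e:ℂ)^2))*(k_x:ℂ)^2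
        *(Complex.exp (Complex.I * ((k_x:ℂ)*(x:ℂ) + (k_z:ℂ)*(z:ℂ) + (k_w:ℂ)*(w:ℂ)))
          * ((F v : ℝ) : ℂ))) * Complex.I_sq
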